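/- Under assumption (H), with λ⋆ := exp(lim_{n→∞} (1/n) log νQ^{(n)}(1)): (i) if η and η' are probability measures on X with ηQ = λ⋆η and η'Q = λ⋆η', then η = η'; (ii) if h and h' are bounded measurable nonnegative functions, neither of which is ν-almost everywhere zero, satisfying Q(h) = λ⋆h and Q(h') = λ⋆h' pointwise, then there is a constant c > 0 with h = c·h' ν-almost everywhere. -/

import Mathlib

open MeasureTheory ProbabilityTheory Filter
open scoped ENNReal
open scoped NNReal

/-- The operator `Q(φ)(x) = G(x) ∫ φ(y) M(x,dy)` associated with the kernel
`Q(x,dy) := G(x) M(x,dy)`. -/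
noncomputable def Qop {X : Type*} [MeasurableSpace X] (G : X → ℝ) (M : Kernel X X)
    (φ : X → ℝ) (x : X) : ℝ :=
  G x * ∫ y, φ y ∂(M x)

/-- The `n`-fold iterate `Q^{(n)}` of the operator `Q`, `Q^{(0)} = Id`. -/
noncomputable def Qiter {X : Type*} [MeasurableSpace X] (G : X → ℝ) (M : Kernel X X) :
    ℕ → (X → ℝ) → X → ℝ
  | 0 => fun φ => φ
  | n + 1 => fun φ => Qop G M (Qiter G M n φ)

lemma integrable_of_bdd {X : Type*} [MeasurableSpace X] {ν : Measure X} [IsFiniteMeasure ν]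
    {f : X → ℝ} (hf : Measurable f) {C : ℝ} (h : ∀ x, |f x| ≤ C) : Integrable f ν :=
  ⟨hf.aestronglyMeasurable, HasFiniteIntegral.of_bounded (C := C) (ae_of_all _ (by simpa using h))⟩

lemma key {X : Type*} [MeasurableSpace X] [Nonempty X] (ν : Measure X) [IsProbabilityMeasure ν]
    (k : X → X → ℝ) (εm εp lam : ℝ) (hk_meas : Measurable fun p : X × X => k p.1 p.2)
    (hεm : 0 < εm) (hlb : ∀ x y, εm ≤ k x y) (hub : ∀ x y, k x y ≤ εp)
    (hlam : 0 < lam)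
    (f f' : X → ℝ) (hf : Measurable f) (hf' : Measurable f')
    (hfnn : ∀ x, 0 ≤ f x) (hf'nn : ∀ x, 0 ≤ f' x)
    (hfbd : ∃ C, ∀ x, f x ≤ C) (hf'bd : ∃ C, ∀ x, f' x ≤ C)
    (hfpos : 0 < ∫ x, f x ∂ν) (hf'pos : 0 < ∫ x, f' x ∂ν)
    (heig : ∀ y, lam * f y = ∫ x, f x * k x y ∂ν)
    (heig' : ∀ y, lam * f' y = ∫ x, f' x * k x y ∂ν) :
    ∃ c : ℝ, 0 < c ∧ f =ᵐ[ν] fun x => c * f' x := by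
  have hεp : 0 < εp := lt_of_lt_of_le hεm (le_trans (hlb (Classical.arbitrary X) (Classical.arbitrary X)) (hub _ _))
  obtain ⟨Cf, hCf⟩ := hfbd
  obtain ⟨Cf', hCf'⟩ := hf'bd
  have hCf0 : 0 ≤ Cf := le_trans (hfnn (Classical.arbitrary X)) (hCf _)
  have hCf'0 : 0 ≤ Cf' := le_trans (hf'nn (Classical.arbitrary X)) (hCf' _)
  -- measurability / integrability of slices
  have hky : ∀ y, Measurable fun x => k x y := fun y =>
    hk_meas.comp (measurable_id.prodMk measurable_const)
  have hint : ∀ (g : X → ℝ), Measurable g → (∀ x, 0 ≤ g x) → (∀ x, g x ≤ Cf + Cf') → ∀ y,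
      Integrable (fun x => g x * k x y) ν := by
    intro g hg hg0 hgC y
    refine integrable_of_bdd (hg.mul (hky y)) (C := (Cf + Cf') * εp) fun x => ?_
    rw [abs_mul, abs_of_nonneg (hg0 x), abs_of_nonneg (le_trans hεm.le (hlb x _))]
    exact mul_le_mul (hgC x) (hub x _) (le_trans hεm.le (hlb x _)) (by linarith)
  have hintf : ∀ y, Integrable (fun x => f x * k x y) ν :=
    hint f hf hfnn (fun x => by linarith [hCf x]) 
  have hintf' : ∀ y, Integrable (fun x => f' x * k x y) ν :=
    hint f' hf' hf'nn (fun x => by linarith [hCf' x])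
  have hintF : Integrable f ν := integrable_of_bdd hf (C := Cf) fun x => by
    rw [abs_of_nonneg (hfnn x)]; exact hCf x
  have hintF' : Integrable f' ν := integrable_of_bdd hf' (C := Cf') fun x => by
    rw [abs_of_nonneg (hf'nn x)]; exact hCf' x
  -- pointwise bounds from eigenvalue equation
  have hlow : ∀ (g : X → ℝ) (hg : Measurable g) (hg0 : ∀ x, 0 ≤ g x)
      (hgint : ∀ y, Integrable (fun x => g x * k x y) ν)
      (hgI : Integrable g ν)
      (hge : ∀ y, lam * g y = ∫ x, g x * k x y ∂ν),
      ∀ y, εm * ∫ x, g x ∂ν ≤ lam * g y := by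
    intro g hg hg0 hgint hgI hge y
    rw [hge y]
    calc εm * ∫ x, g x ∂ν = ∫ x, g x * εm ∂ν := by
          rw [integral_mul_const]; ring
      _ ≤ ∫ x, g x * k x y ∂ν := by
          refine integral_mono (hgI.mul_const εm) (hgint y) fun x => ?_
          exact mul_le_mul_of_nonneg_left (hlb x y) (hg0 x)
  have hupp : ∀ y, lam * f' y ≤ εp * ∫ x, f' x ∂ν := by
    intro y
    rw [heig' y]
    calc ∫ x, f' x * k x y ∂ν ≤ ∫ x, f' x * εp ∂ν := by
          refine integral_mono (hintf' y) (hintF'.mul_const εp) fun x => ?_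
          exact mul_le_mul_of_nonneg_left (hub x y) (hf'nn x)
      _ = εp * ∫ x, f' x ∂ν := by rw [integral_mul_const]; ring
  set If := ∫ x, f x ∂ν with hIf
  set If' := ∫ x, f' x ∂ν with hIf'
  have ha : ∀ y, εm * If / lam ≤ f y := fun y => by
    have := hlow f hf hfnn hintf hintF heig y
    rw [div_le_iff₀ hlam]; linarith
  have ha' : ∀ y, εm * If' / lam ≤ f' y := fun y => by
    have := hlow f' hf' hf'nn hintf' hintF' heig' y
    rw [div_le_iff₀ hlam]; linarith
  have hb' : ∀ y, f' y ≤ εp * If' / lam := fun y => by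
    have := hupp y
    rw [le_div_iff₀ hlam]; linarith
  have haf : 0 < εm * If / lam := by positivity
  have haf' : 0 < εm * If' / lam := by positivity
  have hbf' : 0 < εp * If' / lam := by positivity
  have hf'pos' : ∀ y, 0 < f' y := fun y => lt_of_lt_of_le haf' (ha' y)
  -- the infimum
  set c := ⨅ y, f y / f' y with hc
  have hbdd : BddBelow (Set.range fun y => f y / f' y) := by
    refine ⟨0, ?_⟩
    rintro _ ⟨y, rfl⟩
    exact div_nonneg (hfnn y) (hf'nn y)
  have hcle : ∀ y, c ≤ f y / f' y := fun y => ciInf_le hbdd y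
  have hcpos : 0 < c := by
    have : ∀ y, (εm * If / lam) / (εp * If' / lam) ≤ f y / f' y := fun y => by
      calc (εm * If / lam) / (εp * If' / lam) ≤ (εm * If / lam) / f' y := by
            apply div_le_div_of_nonneg_left haf.le (hf'pos' y) (hb' y)
        _ ≤ f y / f' y := (div_le_div_iff_of_pos_right (hf'pos' y)).mpr (ha y)
    have h1 : (εm * If / lam) / (εp * If' / lam) ≤ c := le_ciInf this
    have h2 : 0 < (εm * If / lam) / (εp * If' / lam) := by positivity
    linarith
  have hcf' : ∀ y, c * f' y ≤ f y := fun y =>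
    (le_div_iff₀ (hf'pos' y)).mp (hcle y)
  -- g := f - c f'
  set g := fun y => f y - c * f' y with hgdef
  have hg0 : ∀ y, 0 ≤ g y := fun y => by simp [hgdef]; linarith [hcf' y]
  have hgmeas : Measurable g := hf.sub (hf'.const_mul c)
  have hgint : Integrable g ν := hintF.sub (hintF'.const_mul c)
  have hgeig : ∀ y, lam * g y = ∫ x, g x * k x y ∂ν := by
    intro y
    have : ∀ x, g x * k x y = f x * k x y - c * (f' x * k x y) := fun x => by
      simp [hgdef]; ring
    simp_rw [this]
    rw [integral_sub (hintf y) ((hintf' y).const_mul c), integral_const_mul c,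
      ← heig y, ← heig' y]
    simp [hgdef]; ring
  have hgintk : ∀ y, Integrable (fun x => g x * k x y) ν := fun y => by
    have : (fun x => g x * k x y) = fun x => f x * k x y - c * (f' x * k x y) := by
      funext x; simp [hgdef]; ring
    rw [this]
    exact (hintf y).sub ((hintf' y).const_mul c)
  set I := ∫ x, g x ∂ν with hIdef
  have hInn : 0 ≤ I := integral_nonneg hg0
  rcases eq_or_lt_of_le hInn with hI0 | hIpos
  · -- I = 0 ⇒ g = 0 a.e.
    have : g =ᵐ[ν] 0 := (integral_eq_zero_iff_of_nonneg hg0 hgint).mp hI0.symm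
    refine ⟨c, hcpos, ?_⟩
    filter_upwards [this] with x hx
    have : f x - c * f' x = 0 := hx
    linarith
  · -- contradiction
    exfalso
    set δ := εm * I / lam with hδ
    have hδpos : 0 < δ := by positivity
    have hgδ : ∀ y, δ ≤ g y := fun y => by
      have := hlow g hgmeas hg0 hgintk hgint hgeig y
      rw [hδ, div_le_iff₀ hlam]; linarith
    set B := εp * If' / lam with hB
    have key2 : ∀ y, c + δ / B ≤ f y / f' y := by
      intro y
      have h1 : c * f' y + δ ≤ f y := by
        have h0 : δ ≤ f y - c * f' y := hgδ y; linarith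
      have h2 : c + δ / B ≤ c + δ / f' y := by
        have : δ / B ≤ δ / f' y :=
          div_le_div_of_nonneg_left hδpos.le (hf'pos' y) (hb' y)
        linarith
      have h3 : c + δ / f' y = (c * f' y + δ) / f' y := by
        rw [add_div, mul_div_cancel_right₀ _ (ne_of_gt (hf'pos' y))]
      have h4 : (c * f' y + δ) / f' y ≤ f y / f' y := (div_le_div_iff_of_pos_right (hf'pos' y)).mpr h1
      linarith [h3 ▸ h2, h4]
    have : c + δ / B ≤ c := le_ciInf key2
    have : 0 < δ / B := by positivity
    linarith
lemma Qop_rep {X : Type*} [MeasurableSpace X]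
    (G : X → ℝ) (M : Kernel X X) [IsMarkovKernel M]
    (ν : Measure X) [IsProbabilityMeasure ν]
    (q : X → X → ℝ) (εm : ℝ)
    (hq_meas : Measurable fun p : X × X => q p.1 p.2)
    (hεm_pos : 0 < εm) (hq_lb : ∀ x y, εm ≤ q x y)
    (hG_pos : ∀ x, 0 < G x)
    (hH : ∀ x (A : Set X), MeasurableSet A →
      ENNReal.ofReal (G x) * M x A = ∫⁻ y in A, ENNReal.ofReal (q x y) ∂ν)
    (φ : X → ℝ) (x : X) :
    G x * ∫ y, φ y ∂(M x) = ∫ y, φ y * q x y ∂ν := by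
  have hqx : Measurable fun y => q x y := hq_meas.comp (measurable_const.prodMk measurable_id)
  have hmeq : (ENNReal.ofReal (G x)) • (M x : Measure X)
      = ν.withDensity (fun y => ENNReal.ofReal (q x y)) := by
    ext A hA
    rw [Measure.smul_apply, smul_eq_mul, withDensity_apply _ hA]
    exact hH x A hA
  have h1 : G x * ∫ y, φ y ∂(M x) = ∫ y, φ y ∂((ENNReal.ofReal (G x)) • (M x : Measure X)) := by
    rw [integral_smul_measure, ENNReal.toReal_ofReal (hG_pos x).le, smul_eq_mul]
  rw [h1, hmeq]
  have : (fun y => ENNReal.ofReal (q x y)) = fun y => ((fun y => (q x y).toNNReal) y : ℝ≥0∞) := rfl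
  rw [this, integral_withDensity_eq_integral_smul (f := fun y => (q x y).toNNReal) (measurable_real_toNNReal.comp hqx) φ]
  congr 1; funext y
  rw [NNReal.smul_def, Real.coe_toNNReal _ (le_trans hεm_pos.le (hq_lb x y)), smul_eq_mul]
  ring
lemma density_of_eigenmeasure {X : Type*} [MeasurableSpace X] (ν : Measure X)
    [IsProbabilityMeasure ν]
    (q : X → X → ℝ) (εm εp : ℝ)
    (hq_meas : Measurable fun p : X × X => q p.1 p.2)
    (hεm_pos : 0 < εm) (hεle : εm ≤ εp)
    (hq_lb : ∀ x y, εm ≤ q x y) (hq_ub : ∀ x y, q x y ≤ εp)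
    (lam : ℝ) (hlam : 0 < lam)
    (η : Measure X) [IsProbabilityMeasure η]
    (heq : ∀ A : Set X, MeasurableSet A →
      ∫⁻ x, (∫⁻ y in A, ENNReal.ofReal (q x y) ∂ν) ∂η = ENNReal.ofReal lam * η A) :
    ∃ ρ : X → ℝ, Measurable ρ ∧ (∀ y, 0 ≤ ρ y) ∧ (∀ y, ρ y ≤ εp / lam) ∧
      (∫ y, ρ y ∂ν) = 1 ∧ (∀ y, lam * ρ y = ∫ x, ρ x * q x y ∂ν) ∧
      η = ν.withDensity (fun y => ENNReal.ofReal (ρ y)) := by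
  have hεp_pos : 0 < εp := lt_of_lt_of_le hεm_pos hεle
  have hlam0 : ENNReal.ofReal lam ≠ 0 := by
    simp [ENNReal.ofReal_eq_zero, not_le, hlam]
  have hlamtop : ENNReal.ofReal lam ≠ ⊤ := ENNReal.ofReal_ne_top
  have hqy : ∀ y, Measurable fun x => q x y :=
    fun y => hq_meas.comp (measurable_id.prodMk measurable_const)
  have hqyint : ∀ y, Integrable (fun x => q x y) η := fun y =>
    integrable_of_bdd (hqy y) (C := εp) fun x => by
      rw [abs_of_nonneg (le_trans hεm_pos.le (hq_lb x y))]; exact hq_ub x y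
  set J := fun y => ∫ x, q x y ∂η with hJdef
  have hJm : Measurable J := by
    have := (hq_meas.stronglyMeasurable).integral_prod_left' (μ := η)
    exact this.measurable
  have hJlb : ∀ y, εm ≤ J y := by
    intro y
    have : ∫ (_ : X), εm ∂η ≤ J y :=
      integral_mono (integrable_const εm) (hqyint y) fun x => hq_lb x y
    simpa using this
  have hJub : ∀ y, J y ≤ εp := by
    intro y
    have : J y ≤ ∫ (_ : X), εp ∂η :=
      integral_mono (hqyint y) (integrable_const εp) fun x => hq_ub x y
    simpa using this
  have hJnn : ∀ y, 0 ≤ J y := fun y => le_trans hεm_pos.le (hJlb y)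
  have hJint : Integrable J ν := integrable_of_bdd hJm (C := εp) fun y => by
    rw [abs_of_nonneg (hJnn y)]; exact hJub y
  have hFeq : ∀ y, ∫⁻ x, ENNReal.ofReal (q x y) ∂η = ENNReal.ofReal (J y) := fun y =>
    (ofReal_integral_eq_lintegral_ofReal (hqyint y)
      (ae_of_all _ fun x => le_trans hεm_pos.le (hq_lb x y))).symm
  -- key identity
  have hkey : ∀ A : Set X, MeasurableSet A →
      ENNReal.ofReal lam * η A = ∫⁻ y in A, ENNReal.ofReal (J y) ∂ν := by
    intro A hA
    rw [← heq A hA]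
    have h1 : ∀ x, (∫⁻ y in A, ENNReal.ofReal (q x y) ∂ν)
        = ∫⁻ y, A.indicator (fun y => ENNReal.ofReal (q x y)) y ∂ν := fun x =>
      (lintegral_indicator hA _).symm
    simp_rw [h1]
    have hmeas : AEMeasurable
        (Function.uncurry fun x y => A.indicator (fun y => ENNReal.ofReal (q x y)) y)
        (η.prod ν) := by
      have he : (Function.uncurry fun x y => A.indicator (fun y => ENNReal.ofReal (q x y)) y)
          = Set.indicator {p : X × X | p.2 ∈ A} (fun p => ENNReal.ofReal (q p.1 p.2)) := by
        funext p
        by_cases hp : p.2 ∈ A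
        · simp [Function.uncurry, Set.indicator_of_mem hp,
            Set.indicator_of_mem (show p ∈ {p : X × X | p.2 ∈ A} from hp)]
        · simp [Function.uncurry, Set.indicator_of_notMem hp,
            Set.indicator_of_notMem (show p ∉ {p : X × X | p.2 ∈ A} from hp)]
      rw [he]
      exact ((ENNReal.measurable_ofReal.comp hq_meas).indicator
        (measurable_snd hA)).aemeasurable
    rw [lintegral_lintegral_swap hmeas, ← lintegral_indicator hA]
    refine lintegral_congr fun y => ?_
    by_cases hy : y ∈ A
    · simp only [Set.indicator_of_mem hy]
      exact hFeq y
    · simp [Set.indicator_of_notMem hy]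
  -- η as withDensity
  have hηd : η = ν.withDensity (fun x => ENNReal.ofReal (lam⁻¹ * J x)) := by
    ext A hA
    rw [withDensity_apply _ hA]
    have h2 : η A = (ENNReal.ofReal lam)⁻¹ * (ENNReal.ofReal lam * η A) := by
      rw [← mul_assoc, ENNReal.inv_mul_cancel hlam0 hlamtop, one_mul]
    rw [h2, hkey A hA, ← lintegral_const_mul' _ _ (ENNReal.inv_ne_top.mpr hlam0)]
    refine lintegral_congr fun z => ?_
    rw [ENNReal.ofReal_mul (inv_nonneg.mpr hlam.le), ENNReal.ofReal_inv_of_pos hlam]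
  refine ⟨fun y => lam⁻¹ * J y, hJm.const_mul _,
    fun y => mul_nonneg (inv_nonneg.mpr hlam.le) (hJnn y), ?_, ?_, ?_, hηd⟩
  · intro y
    rw [div_eq_inv_mul]
    exact mul_le_mul_of_nonneg_left (hJub y) (inv_nonneg.mpr hlam.le)
  · -- total mass
    have h1 := hkey Set.univ MeasurableSet.univ
    rw [measure_univ, mul_one, Measure.restrict_univ] at h1
    rw [← ofReal_integral_eq_lintegral_ofReal hJint (ae_of_all _ hJnn)] at h1
    have h2 : lam = ∫ y, J y ∂ν :=
      (ENNReal.ofReal_eq_ofReal_iff hlam.le (integral_nonneg hJnn)).mp h1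
    rw [integral_const_mul, ← h2, inv_mul_cancel₀ (ne_of_gt hlam)]
  · -- eigen equation
    intro y
    have h4 : ∫ x, q x y ∂η = ∫ x, (lam⁻¹ * J x) * q x y ∂ν := by
      conv_lhs => rw [hηd]
      have he : (fun x => ENNReal.ofReal (lam⁻¹ * J x))
          = fun x => (((lam⁻¹ * J x).toNNReal : ℝ≥0) : ℝ≥0∞) := rfl
      rw [he, integral_withDensity_eq_integral_smul
        (f := fun x => (lam⁻¹ * J x).toNNReal)
        (measurable_real_toNNReal.comp (hJm.const_mul _)) _]
      refine integral_congr_ae (ae_of_all _ fun x => ?_)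
      show (lam⁻¹ * J x).toNNReal • q x y = lam⁻¹ * J x * q x y
      rw [NNReal.smul_def,
        Real.coe_toNNReal _ (mul_nonneg (inv_nonneg.mpr hlam.le) (hJnn x)), smul_eq_mul]
    calc lam * (lam⁻¹ * J y) = J y := by field_simp
      _ = ∫ x, q x y ∂η := rfl
      _ = ∫ x, lam⁻¹ * J x * q x y ∂ν := h4
theorem stmt4 {X : Type*} [MeasurableSpace X]
    (G : X → ℝ) (M : Kernel X X) [IsMarkovKernel M]
    (ν : Measure X) [IsProbabilityMeasure ν]
    (q : X → X → ℝ) (εm εp : ℝ)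
    (hq_meas : Measurable fun p : X × X => q p.1 p.2)
    (hεm_pos : 0 < εm) (hεle : εm ≤ εp)
    (hq_lb : ∀ x y, εm ≤ q x y) (hq_ub : ∀ x y, q x y ≤ εp)
    (hG_meas : Measurable G) (hG_pos : ∀ x, 0 < G x) (hG_bdd : ∃ c, ∀ x, G x ≤ c)
    (hH : ∀ x (A : Set X), MeasurableSet A →
      ENNReal.ofReal (G x) * M x A = ∫⁻ y in A, ENNReal.ofReal (q x y) ∂ν)
    (Λ : ℝ)
    (hΛ : Tendsto (fun n : ℕ => (n : ℝ)⁻¹ *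
        Real.log (∫ x, Qiter G M n (fun _ => (1 : ℝ)) x ∂ν)) atTop (nhds Λ)) :
    (∀ (η η' : Measure X), IsProbabilityMeasure η → IsProbabilityMeasure η' →
      (∀ A : Set X, MeasurableSet A →
        ∫⁻ x, ENNReal.ofReal (G x) * M x A ∂η = ENNReal.ofReal (Real.exp Λ) * η A) →
      (∀ A : Set X, MeasurableSet A →
        ∫⁻ x, ENNReal.ofReal (G x) * M x A ∂η' = ENNReal.ofReal (Real.exp Λ) * η' A) →
      η = η') ∧
    (∀ h h' : X → ℝ, Measurable h → Measurable h' →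
      (∀ x, 0 ≤ h x) → (∀ x, 0 ≤ h' x) →
      (∃ c, ∀ x, h x ≤ c) → (∃ c, ∀ x, h' x ≤ c) →
      ¬ (h =ᵐ[ν] fun _ => (0 : ℝ)) → ¬ (h' =ᵐ[ν] fun _ => (0 : ℝ)) →
      (∀ x, Qop G M h x = Real.exp Λ * h x) →
      (∀ x, Qop G M h' x = Real.exp Λ * h' x) →
      ∃ c : ℝ, 0 < c ∧ h =ᵐ[ν] fun x => c * h' x) := by
  have hlam : 0 < Real.exp Λ := Real.exp_pos Λ
  haveI : Nonempty X := by
    by_contra hne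
    rw [not_nonempty_iff] at hne
    have h1 : ν Set.univ = 1 := measure_univ
    rw [Set.univ_eq_empty_iff.mpr hne, measure_empty] at h1
    exact zero_ne_one h1
  constructor
  · -- uniqueness of the eigenmeasure
    intro η η' hηP hη'P heqη heqη'
    haveI := hηP; haveI := hη'P
    have heq2 : ∀ A : Set X, MeasurableSet A →
        ∫⁻ x, (∫⁻ y in A, ENNReal.ofReal (q x y) ∂ν) ∂η
          = ENNReal.ofReal (Real.exp Λ) * η A := by
      intro A hA
      rw [← heqη A hA]
      exact lintegral_congr fun x => (hH x A hA).symm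
    have heq2' : ∀ A : Set X, MeasurableSet A →
        ∫⁻ x, (∫⁻ y in A, ENNReal.ofReal (q x y) ∂ν) ∂η'
          = ENNReal.ofReal (Real.exp Λ) * η' A := by
      intro A hA
      rw [← heqη' A hA]
      exact lintegral_congr fun x => (hH x A hA).symm
    obtain ⟨ρ, hρm, hρnn, hρub, hρint, hρeig, hρd⟩ :=
      density_of_eigenmeasure ν q εm εp hq_meas hεm_pos hεle hq_lb hq_ub
        (Real.exp Λ) hlam η heq2
    obtain ⟨ρ', hρ'm, hρ'nn, hρ'ub, hρ'int, hρ'eig, hρ'd⟩ :=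
      density_of_eigenmeasure ν q εm εp hq_meas hεm_pos hεle hq_lb hq_ub
        (Real.exp Λ) hlam η' heq2'
    obtain ⟨c, hcpos, hae⟩ :=
      key ν q εm εp (Real.exp Λ) hq_meas hεm_pos hq_lb hq_ub hlam ρ ρ' hρm hρ'm
        hρnn hρ'nn ⟨εp / Real.exp Λ, hρub⟩ ⟨εp / Real.exp Λ, hρ'ub⟩
        (by rw [hρint]; exact one_pos) (by rw [hρ'int]; exact one_pos) hρeig hρ'eig
    have hc1 : c = 1 := by
      have h1 := integral_congr_ae hae
      rw [hρint, integral_const_mul, hρ'int, mul_one] at h1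
      exact h1.symm
    rw [hρd, hρ'd]
    refine withDensity_congr_ae ?_
    filter_upwards [hae] with x hx
    rw [hx, hc1, one_mul]
  · -- uniqueness of the eigenfunction
    intro h h' hm hm' hnn hnn' hbd hbd' hne hne' hQ hQ'
    have hrep : ∀ (φ : X → ℝ) x, G x * ∫ y, φ y ∂(M x) = ∫ y, φ y * q x y ∂ν :=
      fun φ x => Qop_rep G M ν q εm hq_meas hεm_pos hq_lb hG_pos hH φ x
    have heig : ∀ x, Real.exp Λ * h x = ∫ y, h y * q x y ∂ν := fun x => by
      rw [← hQ x]; exact hrep h x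
    have heig' : ∀ x, Real.exp Λ * h' x = ∫ y, h' y * q x y ∂ν := fun x => by
      rw [← hQ' x]; exact hrep h' x
    have hintpos : ∀ (g : X → ℝ), Measurable g → (∀ x, 0 ≤ g x) → (∃ C, ∀ x, g x ≤ C) →
        ¬ (g =ᵐ[ν] fun _ => (0 : ℝ)) → 0 < ∫ x, g x ∂ν := by
      intro g hg hg0 ⟨C, hC⟩ hgne
      have hint : Integrable g ν := integrable_of_bdd hg (C := C) fun x => by
        rw [abs_of_nonneg (hg0 x)]; exact hC x
      rcases eq_or_lt_of_le (integral_nonneg (f := g) hg0) with h0 | h0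
      · exact absurd ((integral_eq_zero_iff_of_nonneg hg0 hint).mp h0.symm) hgne
      · exact h0
    exact key ν (fun a b => q b a) εm εp (Real.exp Λ)
      (hq_meas.comp measurable_swap) hεm_pos (fun x y => hq_lb y x)
      (fun x y => hq_ub y x) hlam h h' hm hm' hnn hnn' hbd hbd'
      (hintpos h hm hnn hbd hne) (hintpos h' hm' hnn' hbd' hne')
      heig heig'
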